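/- For all S, T ∈ U₁(H), the composition T ∘ S belongs to U₁(H), and for every z ∈ B_H one has φ_{T∘S}(z) = φ_T(φ_S(z)); that is, T ↦ φ_T is an action of U₁(H) on B_H by generalized linear fractional transformations. -/

import Mathlib

/-- The extended Hilbert space `H̃ = H ⊕ ℂ` (Hilbert space direct sum). -/
noncomputable abbrev ExtH (H : Type*) [NormedAddCommGroup H] [InnerProductSpace ℂ H] :=
  WithLp 2 (H × ℂ)

/-- The element `(z, a)` of `H̃`. -/
noncomputable def mk2 {H : Type*} [NormedAddCommGroup H] [InnerProductSpace ℂ H]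
    (z : H) (a : ℂ) : ExtH H :=
  (WithLp.equiv 2 (H × ℂ)).symm (z, a)

/-- The generalized linear fractional (Möbius) transformation with block data `(A,x,y,a)`:
`φ(z) = (Az + x)/(⟨y,z⟩ + a)`. -/
noncomputable def moebius {H : Type*} [NormedAddCommGroup H] [InnerProductSpace ℂ H]
    (A : H →L[ℂ] H) (x y : H) (a : ℂ) (z : H) : H :=
  ((inner ℂ y z : ℂ) + a)⁻¹ • (A z + x)

lemma mk2_inj {H : Type*} [NormedAddCommGroup H] [InnerProductSpace ℂ H]
    {z w : H} {a b : ℂ} (h : mk2 z a = mk2 w b) : z = w ∧ a = b := by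
  have := congrArg (WithLp.equiv 2 (H × ℂ)) h
  simp only [mk2, Equiv.apply_symm_apply, Prod.mk.injEq] at this
  exact this

lemma inner_mk2 {H : Type*} [NormedAddCommGroup H] [InnerProductSpace ℂ H]
    (z w : H) (a b : ℂ) :
    (inner ℂ (mk2 z a) (mk2 w b) : ℂ) = inner ℂ z w + (starRingEnd ℂ) a * b := by
  rw [WithLp.prod_inner_apply]
  show inner ℂ z w + inner ℂ a b = _
  simp [mul_comm]

open ContinuousLinearMap in
/-- Denominator is nonzero on the ball. -/
lemma denom_ne_zero
    {H : Type*} [NormedAddCommGroup H] [InnerProductSpace ℂ H] [CompleteSpace H]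
    (ε : ExtH H →L[ℂ] ExtH H) (hε : ∀ (z : H) (l : ℂ), ε (mk2 z l) = mk2 (-z) l)
    (S : ExtH H →L[ℂ] ExtH H)
    (hS : adjoint S ∘L ε ∘L S = ε)
    (As : H →L[ℂ] H) (xs ys : H) (as : ℂ)
    (hSblock : ∀ (z : H) (l : ℂ),
      S (mk2 z l) = mk2 (As z + l • xs) ((inner ℂ ys z : ℂ) + l * as))
    (z : H) (hz : ‖z‖ < 1) : (inner ℂ ys z : ℂ) + as ≠ 0 := by
  set c : ℂ := (inner ℂ ys z : ℂ) + as with hc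
  set u : H := As z + xs with hu
  have hS1 : S (mk2 z 1) = mk2 u c := by
    rw [hSblock z 1]; simp [hu, hc]
  have key : (inner ℂ (ε (S (mk2 z 1))) (S (mk2 z 1)) : ℂ) = inner ℂ (ε (mk2 z 1)) (mk2 z 1) := by
    have := congrArg (fun f => (inner ℂ (f (mk2 z 1)) (mk2 z 1) : ℂ)) hS
    simp only [comp_apply] at this
    rw [← this, adjoint_inner_left]
  rw [hS1, hε, hε, inner_mk2, inner_mk2, map_one, one_mul, inner_neg_left, inner_neg_left,
    inner_self_eq_norm_sq_to_K, inner_self_eq_norm_sq_to_K] at key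
  have hre : ‖c‖ ^ 2 = ‖u‖ ^ 2 + (1 - ‖z‖ ^ 2) := by
    have : (starRingEnd ℂ) c * c = (‖c‖ : ℂ) ^ 2 := by
      rw [RCLike.conj_mul]; norm_cast
    rw [this] at key
    have h' : -‖u‖ ^ 2 + ‖c‖ ^ 2 = -‖z‖ ^ 2 + 1 := by
      simp only [Complex.coe_algebraMap, RCLike.algebraMap_eq_ofReal] at key
      exact_mod_cast key
    linarith
  have hzpos : (0 : ℝ) < 1 - ‖z‖ ^ 2 := by nlinarith [norm_nonneg z]
  have : 0 < ‖c‖ ^ 2 := by nlinarith [sq_nonneg ‖u‖]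
  intro h
  simp [h] at this

open ContinuousLinearMap in
/-- for `S, T ∈ U₁(H)` the composition `T ∘ S` belongs to `U₁(H)` and
`φ_{T∘S}(z) = φ_T(φ_S(z))` for every `z` in the Hilbert ball: `T ↦ φ_T` is an action of
`U₁(H)` on the Hilbert ball by generalized linear fractional transformations. -/
theorem moebius_action_comp
    {H : Type*} [NormedAddCommGroup H] [InnerProductSpace ℂ H] [CompleteSpace H]
    (ε : ExtH H →L[ℂ] ExtH H) (hε : ∀ (z : H) (l : ℂ), ε (mk2 z l) = mk2 (-z) l)
    (S T : ExtH H →L[ℂ] ExtH H)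
    (hS : adjoint S ∘L ε ∘L S = ε) (hT : adjoint T ∘L ε ∘L T = ε)
    (As : H →L[ℂ] H) (xs ys : H) (as : ℂ)
    (hSblock : ∀ (z : H) (l : ℂ),
      S (mk2 z l) = mk2 (As z + l • xs) ((inner ℂ ys z : ℂ) + l * as))
    (At : H →L[ℂ] H) (xt yt : H) (at' : ℂ)
    (hTblock : ∀ (z : H) (l : ℂ),
      T (mk2 z l) = mk2 (At z + l • xt) ((inner ℂ yt z : ℂ) + l * at')) :
    (adjoint (T ∘L S) ∘L ε ∘L (T ∘L S) = ε) ∧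
    (∀ (Ac : H →L[ℂ] H) (xc yc : H) (ac : ℂ),
      (∀ (z : H) (l : ℂ),
        (T ∘L S) (mk2 z l) = mk2 (Ac z + l • xc) ((inner ℂ yc z : ℂ) + l * ac)) →
      ∀ z : H, ‖z‖ < 1 →
        moebius Ac xc yc ac z = moebius At xt yt at' (moebius As xs ys as z)) := by
  constructor
  · have hT' : ∀ w, adjoint T (ε (T w)) = ε w := fun w =>
      congrArg (fun f => f w) hT
    have hS' : ∀ w, adjoint S (ε (S w)) = ε w := fun w =>
      congrArg (fun f => f w) hS
    ext w
    simp only [comp_apply, adjoint_comp]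
    rw [hT' (S w), hS' w]
  · intro Ac xc yc ac hCblock z hz
    set c : ℂ := (inner ℂ ys z : ℂ) + as with hc
    set u : H := As z + xs with hu
    have hcne : c ≠ 0 := denom_ne_zero ε hε S hS As xs ys as hSblock z hz
    have hS1 : S (mk2 z 1) = mk2 u c := by rw [hSblock z 1]; simp [hu, hc]
    have hTS : (T ∘L S) (mk2 z 1) = mk2 (At u + c • xt) ((inner ℂ yt u : ℂ) + c * at') := by
      rw [comp_apply, hS1, hTblock u c]
    have hC1 : (T ∘L S) (mk2 z 1) = mk2 (Ac z + xc) ((inner ℂ yc z : ℂ) + ac) := by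
      rw [hCblock z 1]; simp
    rw [hC1] at hTS
    obtain ⟨h1, h2⟩ := mk2_inj hTS
    unfold moebius
    rw [← hc, ← hu, h1, h2, inner_smul_right, map_smul]
    have e1 : c⁻¹ • At u + xt = c⁻¹ • (At u + c • xt) := by
      rw [smul_add, smul_smul, inv_mul_cancel₀ hcne, one_smul]
    have e2 : c⁻¹ * (inner ℂ yt u : ℂ) + at' = c⁻¹ * ((inner ℂ yt u : ℂ) + c * at') := by
      field_simp
    have e3 : (c⁻¹ * ((inner ℂ yt u : ℂ) + c * at'))⁻¹ * c⁻¹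
        = ((inner ℂ yt u : ℂ) + c * at')⁻¹ := by
      rw [mul_inv, inv_inv, mul_comm, ← mul_assoc, inv_mul_cancel₀ hcne, one_mul]
    rw [e1, e2, smul_smul, e3]
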